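/- For any real c > 0 and integer n > c², (1 - c/n)^{n-1} ≥ e^{-c} · (1 - c²/n). -/

import Mathlib

/-- For `c > 0` and `n > c²`, `(1 - c/n)^{n-1} ≥ e^{-c} (1 - c²/n)`. -/
theorem one_sub_c_div_n_pow (c : ℝ) (hc : 0 < c) (n : ℕ) (hn : c ^ 2 < n) :
    (1 - c / n) ^ (n - 1) ≥ Real.exp (-c) * (1 - c ^ 2 / n) := by
  have hn0 : 0 < n := by
    rcases Nat.eq_zero_or_pos n with h | h
    · subst h; simp at hn; nlinarith
    · exact h
  have hN : (0:ℝ) < n := by exact_mod_cast hn0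
  have hN1 : (1:ℝ) ≤ n := by exact_mod_cast hn0
  set N : ℝ := (n:ℝ) with hNdef
  have hcN : c < N := by nlinarith [sq_nonneg (c-1)]
  have ht1 : c / N < 1 := (div_lt_one hN).mpr hcN
  have hNc : 0 < N - c := by linarith
  set s : ℝ := c / (N - c) with hs
  have step1 : Real.exp (-s) ≤ 1 - c/N := by
    rw [Real.exp_neg, inv_le_comm₀ (Real.exp_pos s) (by linarith)]
    calc (1 - c/N)⁻¹ = s + 1 := by rw [hs]; field_simp; ring
      _ ≤ Real.exp s := Real.add_one_le_exp s
  have step2 : Real.exp (-s) ^ (n-1) ≤ (1 - c/N) ^ (n-1) :=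
    pow_le_pow_left₀ (Real.exp_pos _).le step1 _
  have hcast : ((n-1 : ℕ) : ℝ) = N - 1 := by
    rw [Nat.cast_sub hn0, Nat.cast_one]
  have step3 : Real.exp (-s) ^ (n-1) = Real.exp (-((N-1)*s)) := by
    rw [← Real.exp_nat_mul, hcast]; ring_nf
  have harith : c - (N-1)*s + c^2/N = c*(N-c^2)/(N*(N-c)) := by
    rw [hs]; field_simp; ring
  have hpos : 0 ≤ c*(N-c^2)/(N*(N-c)) := by
    apply div_nonneg
    · nlinarith
    · nlinarith
  have key : 1 - c^2/N ≤ (c - (N-1)*s) + 1 := by nlinarith [harith ▸ hpos]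
  calc Real.exp (-c) * (1 - c^2/N)
      ≤ Real.exp (-c) * Real.exp (c - (N-1)*s) :=
        mul_le_mul_of_nonneg_left (key.trans (Real.add_one_le_exp _)) (Real.exp_pos _).le
    _ = Real.exp (-((N-1)*s)) := by rw [← Real.exp_add]; ring_nf
    _ = Real.exp (-s) ^ (n-1) := step3.symm
    _ ≤ (1 - c/N) ^ (n-1) := step2
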